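/- Let P_C be a finite set of at least 4 points in the plane, and let a₁a₂ be a longest edge of the convex hull of P_C, with the hull lying above the horizontal segment a₁a₂. Then the vertical half-strip with base a₁a₂ extending upward contains at least one point of P_C \ {a₁, a₂}. -/

import Mathlib

open Real Complex

lemma fcomb (s : ℝ) (a b : ℝ) (x y : ℂ) :
    ((a • x + b • y).im - s * (a • x + b • y).re)
      = a * (x.im - s * x.re) + b * (y.im - s * y.re) := by
  simp [Complex.add_im, Complex.add_re, Complex.smul_im, Complex.smul_re, smul_eq_mul]
  ring

lemma extreme_of_support (P : Finset ℂ) (s c : ℝ)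
    (hsupp : ∀ p ∈ P, p.im - s * p.re ≤ c)
    (u v : ℂ) (hu : u ∈ P) (hv : v ∈ P)
    (huc : u.im - s * u.re = c) (hvc : v.im - s * v.re = c)
    (hmin : ∀ p ∈ P, p.im - s * p.re = c → u.re ≤ p.re)
    (hmax : ∀ p ∈ P, p.im - s * p.re = c → p.re ≤ v.re)
    (hlt : u.re < v.re) :
    IsExtreme ℝ (convexHull ℝ (P : Set ℂ)) (segment ℝ u v) := by
  classical
  have hne : v.re - u.re ≠ 0 := by linarith
  -- points on the line with re between u.re and v.re lie on the segment
  have mem_seg : ∀ p : ℂ, p.im - s * p.re = c → u.re ≤ p.re → p.re ≤ v.re →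
      p ∈ segment ℝ u v := by
    intro p hpc h1 h2
    set t : ℝ := (p.re - u.re) / (v.re - u.re) with ht
    have ht0 : 0 ≤ t := div_nonneg (by linarith) (by linarith)
    have ht1 : t ≤ 1 := by
      rw [div_le_one (by linarith)]; linarith
    refine ⟨1 - t, t, by linarith, ht0, by ring, ?_⟩
    have hre : (1 - t) * u.re + t * v.re = p.re := by
      rw [ht]
      field_simp
      ring
    apply Complex.ext
    · rw [Complex.add_re, Complex.smul_re, Complex.smul_re, smul_eq_mul, smul_eq_mul]
      exact hre
    · have him : (1 - t) * u.im + t * v.im = p.im := by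
        have hu' : u.im = s * u.re + c := by linarith
        have hv' : v.im = s * v.re + c := by linarith
        have hp' : p.im = s * p.re + c := by linarith
        rw [hu', hv', hp']
        linear_combination s * hre
      rw [Complex.add_im, Complex.smul_im, Complex.smul_im, smul_eq_mul, smul_eq_mul]
      exact him
  -- hull points with f = c are in the segment
  have key : ∀ z ∈ convexHull ℝ (P : Set ℂ), z.im - s * z.re = c → z ∈ segment ℝ u v := by
    intro z hz hzc
    rw [Finset.convexHull_eq] at hz
    obtain ⟨w, hw0, hw1, hwz⟩ := hz
    have hzsum : z = ∑ y ∈ P, w y • y := by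
      rw [← hwz, Finset.centerMass_eq_of_sum_1 _ _ hw1]
      simp
    have hre : z.re = ∑ y ∈ P, w y * y.re := by
      rw [hzsum, Complex.re_sum]
      exact Finset.sum_congr rfl fun y _ => by simp [Complex.smul_re, smul_eq_mul]
    have him : z.im = ∑ y ∈ P, w y * y.im := by
      rw [hzsum, Complex.im_sum]
      exact Finset.sum_congr rfl fun y _ => by simp [Complex.smul_im, smul_eq_mul]
    have hsum0 : ∑ y ∈ P, w y * (c - (y.im - s * y.re)) = 0 := by
      have : ∑ y ∈ P, w y * (c - (y.im - s * y.re))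
          = c * (∑ y ∈ P, w y) - ((∑ y ∈ P, w y * y.im) - s * ∑ y ∈ P, w y * y.re) := by
        rw [Finset.mul_sum, Finset.mul_sum, ← Finset.sum_sub_distrib, ← Finset.sum_sub_distrib]
        exact Finset.sum_congr rfl fun y _ => by ring
      rw [this, hw1, ← hre, ← him]
      linarith
    have hzero : ∀ y ∈ P, w y * (c - (y.im - s * y.re)) = 0 := by
      refine (Finset.sum_eq_zero_iff_of_nonneg ?_).1 hsum0
      intro y hy
      have := hsupp y hy
      have := hw0 y hy
      nlinarith
    have hmem : ∀ y ∈ P.filter (fun y => w y ≠ 0), y ∈ segment ℝ u v := by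
      intro y hy
      rw [Finset.mem_filter] at hy
      have hyc : y.im - s * y.re = c := by
        have := hzero y hy.1
        rcases mul_eq_zero.1 this with h | h
        · exact absurd h hy.2
        · linarith
      exact mem_seg y hyc (hmin y hy.1 hyc) (hmax y hy.1 hyc)
    have hsum1 : ∑ y ∈ P.filter (fun y => w y ≠ 0), w y = 1 := by
      rw [Finset.sum_filter_ne_zero]; exact hw1
    have : z ∈ convexHull ℝ (segment ℝ u v) := by
      rw [← hwz, ← Finset.centerMass_filter_ne_zero]
      exact Finset.centerMass_mem_convexHull _ (fun y hy => hw0 y (Finset.mem_filter.1 hy).1)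
        (by rw [hsum1]; norm_num) (fun y hy => hmem y hy)
    rwa [(convex_segment u v).convexHull_eq] at this
  have hlin : IsLinearMap ℝ (fun z : ℂ => z.im - s * z.re) := by
    constructor
    · intro x y; simp [Complex.add_im, Complex.add_re]; ring
    · intro a x; simp [Complex.smul_im, Complex.smul_re, smul_eq_mul]; ring
  have hle : ∀ x ∈ convexHull ℝ (P : Set ℂ), x.im - s * x.re ≤ c := by
    intro x hx
    exact convexHull_min (fun p hp => hsupp p hp) (convex_halfSpace_le hlin c) hx
  constructor
  · exact segment_subset_convexHull (by exact_mod_cast hu) (by exact_mod_cast hv)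
  · intro x₁ hx₁ x₂ hx₂ z hzseg hzopen
    obtain ⟨a, b, ha, hb, hab, hz⟩ := hzseg
    have hzc : z.im - s * z.re = c := by
      rw [← hz, fcomb, huc, hvc]
      linear_combination c * hab
    obtain ⟨a', b', ha', hb', hab', hz'⟩ := hzopen
    have hcomb : a' * (x₁.im - s * x₁.re) + b' * (x₂.im - s * x₂.re) = c := by
      rw [← fcomb, hz', hzc]
    have h1 : x₁.im - s * x₁.re ≤ c := hle x₁ hx₁
    have h2 : x₂.im - s * x₂.re ≤ c := hle x₂ hx₂
    have e1 : a' * (c - (x₁.im - s * x₁.re)) + b' * (c - (x₂.im - s * x₂.re)) = 0 := by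
      linear_combination c * hab' - hcomb
    have t1 : 0 ≤ a' * (c - (x₁.im - s * x₁.re)) := mul_nonneg ha'.le (by linarith)
    have t2 : 0 ≤ b' * (c - (x₂.im - s * x₂.re)) := mul_nonneg hb'.le (by linarith)
    have z1 : a' * (c - (x₁.im - s * x₁.re)) = 0 := by linarith
    have z2 : b' * (c - (x₂.im - s * x₂.re)) = 0 := by linarith
    have hc1 : x₁.im - s * x₁.re = c := by
      rcases mul_eq_zero.1 z1 with h | h
      · exact absurd h (ne_of_gt ha')
      · linarith
    have hc2 : x₂.im - s * x₂.re = c := by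
      rcases mul_eq_zero.1 z2 with h | h
      · exact absurd h (ne_of_gt hb')
      · linarith
    exact key x₁ hx₁ hc1


section helpers

/-- height of the segment `pq` over the vertical line `x = x₀` -/
noncomputable def hsval (x₀ : ℝ) (p q : ℂ) : ℝ :=
  ((q.re - x₀) * p.im + (x₀ - p.re) * q.im) / (q.re - p.re)

end helpers

set_option maxHeartbeats 1000000 in
/-- Let `P` be a finite set of at least 4 points, and let `a₁a₂` be a
longest edge of the convex hull of `P` (an edge being a segment between distinct points
that is an extreme subset of the hull), with `a₁a₂` horizontal, `a₁` left of `a₂`, and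
the hull lying above it.  Then the vertical half-strip with base `a₁a₂` extending
upward contains a point of `P \ {a₁, a₂}`. -/
theorem halfstrip_above_longest_edge_nonempty
    (P : Finset ℂ) (h4 : 4 ≤ P.card) (a₁ a₂ : ℂ)
    (ha₁ : a₁ ∈ P) (ha₂ : a₂ ∈ P) (hhor : a₁.im = a₂.im) (hlt : a₁.re < a₂.re)
    (habove : ∀ p ∈ P, a₁.im ≤ p.im)
    (hedge : IsExtreme ℝ (convexHull ℝ (P : Set ℂ)) (segment ℝ a₁ a₂))
    (hlongest : ∀ x y : ℂ, x ≠ y →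
      IsExtreme ℝ (convexHull ℝ (P : Set ℂ)) (segment ℝ x y) → dist x y ≤ dist a₁ a₂) :
    ∃ p ∈ P, p ≠ a₁ ∧ p ≠ a₂ ∧ a₁.re ≤ p.re ∧ p.re ≤ a₂.re ∧ a₁.im ≤ p.im := by
  classical
  by_contra hcon
  push_neg at hcon
  have hstrict : ∀ p ∈ P, p ≠ a₁ → p ≠ a₂ → p.re < a₁.re ∨ a₂.re < p.re := by
    intro p hp h1 h2
    by_contra h
    push_neg at h
    exact absurd (habove p hp) (not_le.2 (hcon p hp h1 h2 h.1 h.2))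
  have hsub : (P : Set ℂ) ⊆ convexHull ℝ (P : Set ℂ) := subset_convexHull ℝ _
  have hsegre : ∀ z ∈ segment ℝ a₁ a₂, a₁.re ≤ z.re ∧ z.re ≤ a₂.re := by
    rintro z ⟨a, b, ha, hb, hab, hz⟩
    have hre : a * a₁.re + b * a₂.re = z.re := by
      rw [← hz, Complex.add_re, Complex.smul_re, Complex.smul_re]
      rfl
    have e1 : z.re - a₁.re = b * (a₂.re - a₁.re) := by
      linear_combination (-1 : ℝ) * hre + a₁.re * hab
    have e2 : a₂.re - z.re = a * (a₂.re - a₁.re) := by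
      linear_combination hre - a₂.re * hab
    constructor
    · linarith [mul_nonneg hb (by linarith : (0:ℝ) ≤ a₂.re - a₁.re)]
    · linarith [mul_nonneg ha (by linarith : (0:ℝ) ≤ a₂.re - a₁.re)]
  have hbaseL : ∀ p ∈ P, p.im = a₁.im → p.re < a₁.re → False := by
    intro p hp him hre
    have hd : 0 < a₂.re - p.re := by linarith
    set t : ℝ := (a₂.re - a₁.re) / (a₂.re - p.re) with htdef
    have ht0 : 0 < t := div_pos (by linarith) hd
    have ht1 : t < 1 := by rw [htdef, div_lt_one hd]; linarith
    have hmem : a₁ ∈ openSegment ℝ p a₂ := by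
      refine ⟨t, 1 - t, ht0, by linarith, by ring, ?_⟩
      have hcan : t * (a₂.re - p.re) = a₂.re - a₁.re := by
        rw [htdef]; field_simp
      apply Complex.ext
      · rw [Complex.add_re, Complex.smul_re, Complex.smul_re, smul_eq_mul, smul_eq_mul]
        linarith [hcan]
      · rw [Complex.add_im, Complex.smul_im, Complex.smul_im, smul_eq_mul, smul_eq_mul,
          him, ← hhor]
        ring
    have := hedge.2 (hsub hp) (hsub (Finset.mem_coe.2 ha₂))
      (left_mem_segment ℝ a₁ a₂) hmem
    linarith [(hsegre p this).1]
  have hbaseR : ∀ p ∈ P, p.im = a₁.im → a₂.re < p.re → False := by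
    intro p hp him hre
    have hd : 0 < p.re - a₁.re := by linarith
    set t : ℝ := (a₂.re - a₁.re) / (p.re - a₁.re) with htdef
    have ht0 : 0 < t := div_pos (by linarith) hd
    have ht1 : t < 1 := by rw [htdef, div_lt_one hd]; linarith
    have hmem : a₂ ∈ openSegment ℝ a₁ p := by
      refine ⟨1 - t, t, by linarith, ht0, by ring, ?_⟩
      have hcan : t * (p.re - a₁.re) = a₂.re - a₁.re := by
        rw [htdef]; field_simp
      apply Complex.ext
      · rw [Complex.add_re, Complex.smul_re, Complex.smul_re, smul_eq_mul, smul_eq_mul]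
        linarith [hcan]
      · rw [Complex.add_im, Complex.smul_im, Complex.smul_im, smul_eq_mul, smul_eq_mul,
          him, ← hhor]
        ring
    have := hedge.right_mem_of_mem_openSegment (hsub (Finset.mem_coe.2 ha₁)) (hsub hp)
      (right_mem_segment ℝ a₁ a₂) hmem
    linarith [(hsegre p this).2]
  -- the two sides
  set x₀ : ℝ := (a₁.re + a₂.re) / 2 with hx₀def
  have hx₀1 : a₁.re < x₀ := by rw [hx₀def]; linarith
  have hx₀2 : x₀ < a₂.re := by rw [hx₀def]; linarith
  set L : Finset ℂ := P.filter (fun p => p.re ≤ a₁.re) with hLdef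
  set R : Finset ℂ := P.filter (fun p => a₂.re ≤ p.re) with hRdef
  have ha₁L : a₁ ∈ L := Finset.mem_filter.2 ⟨ha₁, le_refl _⟩
  have ha₂R : a₂ ∈ R := Finset.mem_filter.2 ⟨ha₂, le_refl _⟩
  have hLR : ∀ p ∈ P, p ∈ L ∨ p ∈ R := by
    intro p hp
    by_cases h1 : p = a₁
    · exact Or.inl (Finset.mem_filter.2 ⟨hp, by rw [h1]⟩)
    by_cases h2 : p = a₂
    · exact Or.inr (Finset.mem_filter.2 ⟨hp, by rw [h2]⟩)
    rcases hstrict p hp h1 h2 with h | h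
    · exact Or.inl (Finset.mem_filter.2 ⟨hp, h.le⟩)
    · exact Or.inr (Finset.mem_filter.2 ⟨hp, h.le⟩)
  -- maximizing pair : the bridge over the strip
  obtain ⟨⟨u, v⟩, huv, hmaxuv⟩ := (L ×ˢ R).exists_max_image (fun pq => hsval x₀ pq.1 pq.2)
    ⟨(a₁, a₂), Finset.mem_product.2 ⟨ha₁L, ha₂R⟩⟩
  rw [Finset.mem_product] at huv
  have huP : u ∈ P := (Finset.mem_filter.1 huv.1).1
  have hvP : v ∈ P := (Finset.mem_filter.1 huv.2).1
  have hure : u.re ≤ a₁.re := (Finset.mem_filter.1 huv.1).2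
  have hvre : a₂.re ≤ v.re := (Finset.mem_filter.1 huv.2).2
  have hd : 0 < v.re - u.re := by linarith
  set s : ℝ := (v.im - u.im) / (v.re - u.re) with hsdef
  set c : ℝ := u.im - s * u.re with hcdef
  have hsd : s * (v.re - u.re) = v.im - u.im := by
    rw [hsdef]; field_simp
  have huc : u.im - s * u.re = c := by rw [hcdef]
  have hvc : v.im - s * v.re = c := by rw [hcdef]; linarith [hsd]
  have hvaluv : hsval x₀ u v = s * x₀ + c := by
    rw [hsval, div_eq_iff (ne_of_gt hd)]
    have hu' : u.im = s * u.re + c := by linarith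
    have hv' : v.im = s * v.re + c := by linarith
    rw [hu', hv']; ring
  have hsupp : ∀ p ∈ P, p.im - s * p.re ≤ c := by
    intro p hp
    by_contra habs
    push_neg at habs
    rcases hLR p hp with hpL | hpR
    · have hpre : p.re ≤ a₁.re := (Finset.mem_filter.1 hpL).2
      have hdpv : 0 < v.re - p.re := by linarith
      have h1 : hsval x₀ u v < hsval x₀ p v := by
        rw [hvaluv, hsval, lt_div_iff₀ hdpv]
        have hv' : v.im = s * v.re + c := by linarith
        rw [hv']
        nlinarith [mul_pos (show (0:ℝ) < v.re - x₀ by linarith)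
          (show (0:ℝ) < p.im - s * p.re - c by linarith)]
      exact absurd (hmaxuv (p, v) (Finset.mem_product.2 ⟨hpL, huv.2⟩)) (not_le.2 h1)
    · have hpre : a₂.re ≤ p.re := (Finset.mem_filter.1 hpR).2
      have hdup : 0 < p.re - u.re := by linarith
      have h1 : hsval x₀ u v < hsval x₀ u p := by
        rw [hvaluv, hsval, lt_div_iff₀ hdup]
        have hu' : u.im = s * u.re + c := by linarith
        rw [hu']
        nlinarith [mul_pos (show (0:ℝ) < x₀ - u.re by linarith)
          (show (0:ℝ) < p.im - s * p.re - c by linarith)]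
      exact absurd (hmaxuv (u, p) (Finset.mem_product.2 ⟨huv.1, hpR⟩)) (not_le.2 h1)
  -- the extreme points of the face
  set M : Finset ℂ := P.filter (fun p => p.im - s * p.re = c) with hMdef
  have huM : u ∈ M := Finset.mem_filter.2 ⟨huP, huc⟩
  have hvM : v ∈ M := Finset.mem_filter.2 ⟨hvP, hvc⟩
  obtain ⟨u', hu'M, hu'min⟩ := M.exists_min_image Complex.re ⟨u, huM⟩
  obtain ⟨v', hv'M, hv'max⟩ := M.exists_max_image Complex.re ⟨v, hvM⟩
  have hu'P : u' ∈ P := (Finset.mem_filter.1 hu'M).1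
  have hv'P : v' ∈ P := (Finset.mem_filter.1 hv'M).1
  have hu'c : u'.im - s * u'.re = c := (Finset.mem_filter.1 hu'M).2
  have hv'c : v'.im - s * v'.re = c := (Finset.mem_filter.1 hv'M).2
  have hu're : u'.re ≤ a₁.re := le_trans (hu'min u huM) hure
  have hv're : a₂.re ≤ v'.re := le_trans hvre (hv'max v hvM)
  have hlt' : u'.re < v'.re := by linarith
  have hext := extreme_of_support P s c hsupp u' v' hu'P hv'P hu'c hv'c
    (fun p hp hpc => hu'min p (Finset.mem_filter.2 ⟨hp, hpc⟩))
    (fun p hp hpc => hv'max p (Finset.mem_filter.2 ⟨hp, hpc⟩)) hlt'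
  have hne' : u' ≠ v' := fun h => absurd (congrArg Complex.re h) (ne_of_lt hlt')
  have hdle : dist u' v' ≤ dist a₁ a₂ := hlongest u' v' hne' hext
  have hdist12 : dist a₁ a₂ = a₂.re - a₁.re := by
    rw [Complex.dist_eq_re_im, hhor, sub_self]
    rw [show ((0:ℝ))^2 = 0 by norm_num, add_zero, Real.sqrt_sq_eq_abs,
      abs_of_nonpos (by linarith)]
    ring
  have hrele : v'.re - u'.re ≤ dist u' v' := by
    have h1 : |(v' - u').re| ≤ ‖v' - u'‖ := Complex.abs_re_le_norm _
    rw [Complex.sub_re] at h1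
    calc v'.re - u'.re ≤ |v'.re - u'.re| := le_abs_self _
      _ ≤ ‖v' - u'‖ := h1
      _ = dist v' u' := (Complex.dist_eq v' u').symm
      _ = dist u' v' := dist_comm _ _
  rw [hdist12] at hdle
  have h1 : u'.re = a₁.re := by linarith
  have h2 : v'.re = a₂.re := by linarith
  have hdeq : dist u' v' = a₂.re - a₁.re := le_antisymm hdle (by linarith)
  have him' : u'.im = v'.im := by
    have hsq : dist u' v' ^ 2 = (u'.re - v'.re) ^ 2 + (u'.im - v'.im) ^ 2 := by
      rw [Complex.dist_eq_re_im]
      exact Real.sq_sqrt (by positivity)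
    rw [hdeq, h1, h2] at hsq
    have hz : (u'.im - v'.im) ^ 2 = 0 := by nlinarith
    have := pow_eq_zero_iff (n := 2) (by norm_num) |>.1 hz
    linarith [sub_eq_zero.1 this]
  have hu'im : a₁.im ≤ u'.im := habove u' hu'P
  rcases eq_or_lt_of_le hu'im with hbase | habove'
  · -- bottom case : u' = a₁, v' = a₂, all points on the base line
    have hu'a : u' = a₁ := Complex.ext h1 hbase.symm
    have hv'a : v' = a₂ := Complex.ext h2 (by rw [← him', ← hbase, hhor])
    have e1 : a₁.im - s * a₁.re = c := by rw [← hu'a]; exact hu'c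
    have e2 : a₂.im - s * a₂.re = c := by rw [← hv'a]; exact hv'c
    have hs0 : s = 0 := by
      have hmul : s * (a₂.re - a₁.re) = 0 := by linear_combination e1 - e2 - hhor
      rcases mul_eq_zero.1 hmul with h | h
      · exact h
      · linarith
    have hcval : c = a₁.im := by rw [hs0] at e1; linarith
    have a12 : a₁ ≠ a₂ := fun h => absurd (congrArg Complex.re h) (ne_of_lt hlt)
    have hthird : ∃ p ∈ P, p ≠ a₁ ∧ p ≠ a₂ := by
      have hmem : a₁ ∈ P.erase a₂ := Finset.mem_erase.2 ⟨a12, ha₁⟩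
      have hcard : 0 < ((P.erase a₂).erase a₁).card := by
        rw [Finset.card_erase_of_mem hmem, Finset.card_erase_of_mem ha₂]
        omega
      obtain ⟨p, hp⟩ := Finset.card_pos.1 hcard
      rw [Finset.mem_erase, Finset.mem_erase] at hp
      exact ⟨p, hp.2.2, hp.1, hp.2.1⟩
    obtain ⟨p, hpP, hp1, hp2⟩ := hthird
    have hpim : p.im = a₁.im := by
      have := hsupp p hpP
      rw [hs0, hcval] at this
      have h2 := habove p hpP
      linarith
    rcases hstrict p hpP hp1 hp2 with h | h
    · exact hbaseL p hpP hpim h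
    · exact hbaseR p hpP hpim h
  · -- u' lies in the strip : contradiction
    have hne1 : u' ≠ a₁ := fun h => absurd (congrArg Complex.im h) (ne_of_gt habove')
    have hne2 : u' ≠ a₂ := fun h => by
      have := congrArg Complex.re h
      rw [h1] at this
      exact absurd this (ne_of_lt hlt)
    rcases hstrict u' hu'P hne1 hne2 with h | h <;> linarith
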